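/- For any ideal I on ω and countable ordinal α ≥ 1: conv_{1+α} is not below I in the Katětov order if and only if the ordinal space ω^α + 1 belongs to FinBW(I), i.e., for every sequence (x_n) in ω^α+1 there is A ∉ I such that (x_n)_{n∈A} converges. -/

import Mathlib

open Set Filter Topology Ordinal

noncomputable section

/-- The derived set of `A`: the set of accumulation (limit) points of `A`. -/
def derivSet {X : Type*} [TopologicalSpace X] (A : Set X) : Set X :=
  {p | p ∈ closure (A \ {p})}

/-- The ordinal space `ω^a + 1 = [0, ω^a]` with the (order) topology. -/
abbrev OrdSpace (a : Ordinal) : Type _ := ↥(Set.Iic (omega0 ^ a))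

/-- The ideal `conv_a` on `ω^a + 1`: sets with finite derived set. -/
def convIdeal (a : Ordinal) : Set (Set (OrdSpace a)) :=
  {A | (derivSet A).Finite}

/-- `I` is an ideal of subsets. -/
structure IsIdeal {S : Type*} (I : Set (Set S)) : Prop where
  empty_mem : ∅ ∈ I
  subset_mem : ∀ {A B : Set S}, A ⊆ B → B ∈ I → A ∈ I
  union_mem : ∀ {A B : Set S}, A ∈ I → B ∈ I → A ∪ B ∈ I

/-- The subsequence of `f` indexed by `A` converges to `x`. -/
def ConvAlong {X : Type*} [TopologicalSpace X] (f : ℕ → X) (A : Set ℕ) (x : X) : Prop :=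
  ∀ U ∈ nhds x, {n ∈ A | f n ∉ U}.Finite

/-- Katětov order: `J ≤_K I`, where `I` lives on `X` and `J` on `Y`. -/
def KatetovLE {X Y : Type*} (J : Set (Set Y)) (I : Set (Set X)) : Prop :=
  ∃ f : X → Y, ∀ A ∈ J, f ⁻¹' A ∈ I

/-- `X ∈ FinBW(I)`: every sequence in `X` has a convergent subsequence indexed
by an `I`-positive set. -/
def InFinBW (I : Set (Set ℕ)) (X : Type*) [TopologicalSpace X] : Prop :=
  ∀ f : ℕ → X, ∃ A : Set ℕ, A ∉ I ∧ ∃ x : X, ConvAlong f A x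

/-! ### Auxiliary lemmas -/

section Aux

lemma derivSet_mono' {X : Type*} [TopologicalSpace X] {S T : Set X} (h : S ⊆ T) :
    derivSet S ⊆ derivSet T := fun _ hp =>
  closure_mono (Set.diff_subset_diff_left h) hp

lemma not_derivSet_of_finite_inter {X : Type*} [TopologicalSpace X] [T1Space X]
    {S V : Set X} {p : X} (hV : V ∈ nhds p) (hfin : (S ∩ V).Finite) :
    p ∉ derivSet S := by
  intro hd
  have hsub : S \ {p} ⊆ ((S \ {p}) ∩ V) ∪ ((S \ {p}) \ V) := by
    intro z hz
    by_cases h : z ∈ V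
    · exact Or.inl ⟨hz, h⟩
    · exact Or.inr ⟨hz, h⟩
  have hmem : p ∈ closure (((S \ {p}) ∩ V) ∪ ((S \ {p}) \ V)) := closure_mono hsub hd
  rw [closure_union] at hmem
  rcases hmem with h1 | h2
  · have hfin' : ((S \ {p}) ∩ V).Finite :=
      hfin.subset (Set.inter_subset_inter_left _ Set.diff_subset)
    rw [hfin'.isClosed.closure_eq] at h1
    exact h1.1.2 rfl
  · obtain ⟨z, hzV, hz⟩ := mem_closure_iff_nhds.mp h2 V hV
    exact hz.2 hzV

lemma not_limit_zero {o : Ordinal} (h : o = 0) : ¬ Order.IsSuccLimit o := by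
  subst h; exact fun hl => lt_irrefl 0 hl.pos

lemma not_limit_succ {o r : Ordinal} (h : o = Order.succ r) : ¬ Order.IsSuccLimit o := by
  subst h; exact fun hl => lt_irrefl _ (hl.succ_lt (Order.lt_succ r))

lemma Ordinal.zero_or_succ_or_limit (o : Ordinal) :
    o = 0 ∨ (∃ r, o = Order.succ r) ∨ Order.IsSuccLimit o := by
  rcases Ordinal.zero_or_succ_or_isSuccLimit o with h | ⟨r, hr⟩ | h
  · exact Or.inl h
  · exact Or.inr (Or.inl ⟨r, hr.symm⟩)
  · exact Or.inr (Or.inr h)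

variable {c : Ordinal}

lemma iic_mem_nhds {p q : ↥(Set.Iic c)} (h : p ≤ q) : Set.Iic q ∈ nhds p := by
  rcases lt_or_eq_of_le (show (q : Ordinal) ≤ c from q.2) with hq | hq
  case inr =>
    have huniv : Set.Iic q = Set.univ := by
      ext z
      simp only [Set.mem_Iic, Set.mem_univ, iff_true]
      exact Subtype.coe_le_coe.mp (le_trans z.2 hq.ge)
    rw [huniv]
    exact Filter.univ_mem
  case inl =>
    have hq1 : (q : Ordinal) + 1 ≤ c := by
      rw [Ordinal.add_one_eq_succ]; exact Order.succ_le_of_lt hq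
    have hIio : Set.Iic q = Set.Iio (⟨(q : Ordinal) + 1, hq1⟩ : ↥(Set.Iic c)) := by
      ext z
      simp only [Set.mem_Iic, Set.mem_Iio]
      constructor
      · intro hz
        show (z : Ordinal) < (q : Ordinal) + 1
        rw [Ordinal.add_one_eq_succ]
        exact Order.lt_succ_iff.mpr (Subtype.coe_le_coe.mpr hz)
      · intro hz
        have hz' : (z : Ordinal) < (q : Ordinal) + 1 := hz
        rw [Ordinal.add_one_eq_succ] at hz'
        exact Subtype.coe_le_coe.mp (Order.lt_succ_iff.mp hz')
    rw [hIio]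
    refine isOpen_Iio.mem_nhds ?_
    show (p : Ordinal) < (q : Ordinal) + 1
    rw [Ordinal.add_one_eq_succ]
    exact Order.lt_succ_iff.mpr (Subtype.coe_le_coe.mpr h)

lemma ioc_mem_nhds {q p : ↥(Set.Iic c)} (h : q < p) : Set.Ioc q p ∈ nhds p := by
  rw [← Set.Ioi_inter_Iic]
  exact Filter.inter_mem (isOpen_Ioi.mem_nhds h) (iic_mem_nhds le_rfl)

lemma isolated_not_derivSet {p : ↥(Set.Iic c)} (h : ¬ Order.IsSuccLimit (p : Ordinal))
    (S : Set ↥(Set.Iic c)) : p ∉ derivSet S := by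
  have hsing : {p} ∈ nhds p := by
    rcases Ordinal.zero_or_succ_or_limit (p : Ordinal) with h0 | ⟨r, hr⟩ | hl
    · have heq : Set.Iic p = {p} := by
        ext z
        simp only [Set.mem_Iic, Set.mem_singleton_iff]
        constructor
        · intro hz
          apply Subtype.ext
          have hz' : (z : Ordinal) ≤ (p : Ordinal) := hz
          rw [h0] at hz'
          rw [h0]
          exact nonpos_iff_eq_zero.mp hz'
        · intro hz; rw [hz]
      rw [← heq]
      exact iic_mem_nhds le_rfl
    · have hrp : r < (p : Ordinal) := hr ▸ Order.lt_succ r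
      have heq : Set.Ioc (⟨r, le_trans hrp.le p.2⟩ : ↥(Set.Iic c)) p = {p} := by
        ext z
        simp only [Set.mem_Ioc, Set.mem_singleton_iff]
        constructor
        · rintro ⟨h1, h2⟩
          apply Subtype.ext
          have h1' : r < (z : Ordinal) := h1
          have h2' : (z : Ordinal) ≤ (p : Ordinal) := h2
          refine le_antisymm h2' ?_
          rw [hr]
          exact Order.succ_le_of_lt h1'
        · intro hz
          rw [hz]
          exact ⟨show r < (p : Ordinal) from hrp, le_rfl⟩
      rw [← heq]
      exact ioc_mem_nhds (show r < (p : Ordinal) from hrp)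
    · exact absurd hl h
  intro hd
  obtain ⟨z, hz1, hz2⟩ := mem_closure_iff_nhds.mp hd {p} hsing
  exact hz2.2 hz1

lemma exists_Ioc_nhds {p : ↥(Set.Iic c)} (h0 : (0 : Ordinal) < (p : Ordinal))
    {U : Set ↥(Set.Iic c)} (hU : U ∈ nhds p) :
    ∃ l : ↥(Set.Iic c), l < p ∧ Set.Ioc l p ⊆ U :=
  exists_Ioc_subset_of_mem_nhds hU
    ⟨⟨0, (zero_le : (0 : Ordinal) ≤ c)⟩, show (0 : Ordinal) < (p : Ordinal) from h0⟩

lemma infinite_derivSet_nonempty {S : Set ↥(Set.Iic c)} (h : S.Infinite) :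
    (derivSet S).Nonempty := by
  have hTinf : (Subtype.val '' S).Infinite := h.image Subtype.val_injective.injOn
  have hTc : Subtype.val '' S ⊆ Set.Iic c := by rintro x ⟨s, _, rfl⟩; exact s.2
  set T : Set Ordinal := Subtype.val '' S with hT
  set M : Set Ordinal := {x | (T ∩ Set.Iic x).Infinite} with hM
  have hcM : c ∈ M := by
    have heq : T ∩ Set.Iic c = T := Set.inter_eq_self_of_subset_left hTc
    show (T ∩ Set.Iic c).Infinite
    rw [heq]
    exact hTinf
  have hδM : sInf M ∈ M := csInf_mem ⟨c, hcM⟩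
  have hδc : sInf M ≤ c := csInf_le' hcM
  set δ := sInf M with hδ
  have hbelow : ∀ q < δ, (T ∩ Set.Iic q).Finite := by
    intro q hq
    by_contra hinf
    exact absurd (csInf_le' (show q ∈ M from hinf)) (not_le.mpr hq)
  have hlim : Order.IsSuccLimit δ := by
    rcases Ordinal.zero_or_succ_or_limit δ with h0 | ⟨r, hr⟩ | hl
    · rw [h0] at hδM
      have hsub : T ∩ Set.Iic 0 ⊆ {0} := fun x hx => nonpos_iff_eq_zero.mp hx.2
      exact absurd ((Set.finite_singleton 0).subset hsub) hδM
    · have hrδ : r < δ := hr ▸ Order.lt_succ r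
      have hsub : T ∩ Set.Iic δ ⊆ (T ∩ Set.Iic r) ∪ {δ} := by
        rintro x ⟨hxT, hxδ⟩
        have hxδ' : x ≤ Order.succ r := hr ▸ hxδ
        rcases Order.le_succ_iff_eq_or_le.mp hxδ' with he | hle
        · exact Or.inr (by rw [Set.mem_singleton_iff, he, ← hr])
        · exact Or.inl ⟨hxT, hle⟩
      exact absurd (((hbelow r hrδ).union (Set.finite_singleton δ)).subset hsub) hδM
    · exact hl
  refine ⟨⟨δ, hδc⟩, ?_⟩
  show (⟨δ, hδc⟩ : ↥(Set.Iic c)) ∈ closure (S \ {⟨δ, hδc⟩})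
  rw [mem_closure_iff_nhds]
  intro u hu
  obtain ⟨l, hl, hsub⟩ := exists_Ioc_nhds (show (0 : Ordinal) < δ from hlim.pos) hu
  have hlδ : (l : Ordinal) < δ := hl
  have hinf2 : ((T ∩ Set.Iic δ) \ ((T ∩ Set.Iic (l : Ordinal)) ∪ {δ})).Infinite :=
    hδM.diff ((hbelow l hlδ).union (Set.finite_singleton δ))
  obtain ⟨x, ⟨⟨hxT, hxδ⟩, hxnot⟩⟩ := hinf2.nonempty
  obtain ⟨s, hsS, rfl⟩ := hxT
  have hxl : (l : Ordinal) < (s : Ordinal) := by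
    by_contra hle
    exact hxnot (Or.inl ⟨⟨s, hsS, rfl⟩, not_lt.mp hle⟩)
  have hsne : (s : Ordinal) ≠ δ := fun he => hxnot (Or.inr (by rw [Set.mem_singleton_iff, he]))
  refine ⟨s, hsub ⟨hxl, hxδ⟩, hsS, ?_⟩
  exact fun he => hsne (congrArg Subtype.val he)

lemma conv_of_derivSet_subset {S : Set ↥(Set.Iic c)} {d : ↥(Set.Iic c)}
    (h : derivSet S ⊆ {d}) {U : Set ↥(Set.Iic c)} (hU : U ∈ nhds d) :
    (S \ U).Finite := by
  by_contra hinf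
  obtain ⟨e, he⟩ := infinite_derivSet_nonempty (show (S \ U).Infinite from hinf)
  have hed : e = d := h (derivSet_mono' Set.diff_subset he)
  subst hed
  refine not_derivSet_of_finite_inter hU ?_ he
  rw [Set.diff_inter_self]
  exact Set.finite_empty

lemma omega_mul_add_lt {x y : Ordinal} (h : x < y) {n : Ordinal} (hn : n < omega0) :
    omega0 * x + n < omega0 * y :=
  calc omega0 * x + n < omega0 * x + omega0 := add_lt_add_right hn _
    _ = omega0 * Order.succ x := (Ordinal.mul_succ _ _).symm
    _ ≤ omega0 * y := mul_le_mul_right (Order.succ_le_of_lt h) _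

lemma le_of_omega_mul_lt {u x n : Ordinal} (hn : n < omega0)
    (h : omega0 * u < omega0 * x + n) : u ≤ x := by
  by_contra hc
  exact absurd (h.trans (omega_mul_add_lt (not_le.mp hc) hn)) (lt_irrefl _)

lemma le_of_omega_mul_add_le {x q n : Ordinal} (hn : n < omega0)
    (h : omega0 * x + n ≤ omega0 * q) : x ≤ q := by
  by_contra hc
  have h1 : omega0 * q + (0 : Ordinal) < omega0 * x :=
    omega_mul_add_lt (not_le.mp hc) omega0_pos
  rw [add_zero] at h1
  exact absurd ((h1.trans_le ((le_self_add : _ ≤ _ + n))).trans_le h) (lt_irrefl _)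

lemma omega_mul_add_inj {x y : Ordinal} {n m : ℕ}
    (h : omega0 * x + n = omega0 * y + m) : x = y ∧ n = m := by
  have key : ∀ {x' y' : Ordinal} {n' m' : ℕ},
      omega0 * x' + n' = omega0 * y' + m' → x' ≤ y' := by
    intro x' y' n' m' h'
    have h1 : omega0 * x' ≤ omega0 * y' + (m' : Ordinal) :=
      h' ▸ le_self_add
    have h2 : omega0 * y' + (m' : Ordinal) < omega0 * Order.succ y' :=
      omega_mul_add_lt (Order.lt_succ y') (nat_lt_omega0 m')
    have := (mul_lt_mul_iff_right₀ omega0_pos).mp (h1.trans_lt h2)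
    exact Order.lt_succ_iff.mp this
  have hxy : x = y := le_antisymm (key h) (key h.symm)
  subst hxy
  have := (add_left_cancel_iff (a := omega0 * x)).mp h
  exact ⟨rfl, by exact_mod_cast this⟩

lemma IsIdeal.biUnion_mem {S ι : Type*} {I : Set (Set S)} (hI : IsIdeal I) {D : Set ι}
    (hD : D.Finite) {A : ι → Set S} (h : ∀ d ∈ D, A d ∈ I) : (⋃ d ∈ D, A d) ∈ I := by
  have key : ∀ D' : Set ι, D'.Finite → D' ⊆ D → (⋃ d ∈ D', A d) ∈ I := by
    intro D' hD'
    refine Set.Finite.induction_on (motive := fun s _ => s ⊆ D → (⋃ d ∈ s, A d) ∈ I) D' hD' (fun _ => by simpa using hI.empty_mem) ?_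
    intro b s _ _ ih hsub
    rw [Set.biUnion_insert]
    exact hI.union_mem (h _ (hsub (Set.mem_insert _ _)))
      (ih fun d hd => hsub (Set.mem_insert_of_mem _ hd))
  exact key D hD subset_rfl

end Aux

/-! ### Direction 1: Katětov below `I` implies failure of FinBW -/

lemma dir1 {I : Set (Set ℕ)} (hI : IsIdeal I) (a : Ordinal)
    (hK : KatetovLE (convIdeal (1 + a)) I) : ¬ InFinBW I (OrdSpace a) := by
  intro hF
  obtain ⟨f, hf⟩ := hK
  have htop : omega0 ^ (1 + a) = omega0 * omega0 ^ a := by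
    rw [opow_add, opow_one]
  have hMne : ∀ n : ℕ, omega0 ^ a ∈ {x : Ordinal | (f n : Ordinal) ≤ omega0 * x} := by
    intro n
    show (f n : Ordinal) ≤ omega0 * omega0 ^ a
    rw [← htop]
    exact (f n).2
  set gq : ℕ → Ordinal := fun n => sInf {x : Ordinal | (f n : Ordinal) ≤ omega0 * x} with hgq
  have hg1 : ∀ n, (f n : Ordinal) ≤ omega0 * gq n := fun n => csInf_mem ⟨_, hMne n⟩
  have hg2 : ∀ n, gq n ≤ omega0 ^ a := fun n => csInf_le' (hMne n)
  have hgmin : ∀ n z, (f n : Ordinal) ≤ omega0 * z → gq n ≤ z := fun n z hz => csInf_le' hz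
  obtain ⟨A, hA, x, hconv⟩ := hF (fun n => ⟨gq n, hg2 n⟩)
  set g : ℕ → OrdSpace a := fun n => ⟨gq n, hg2 n⟩ with hgdef
  have hpxle : omega0 * (x : Ordinal) ≤ omega0 ^ (1 + a) := by
    rw [htop]; exact mul_le_mul_right x.2 _
  set px : OrdSpace (1 + a) := ⟨omega0 * (x : Ordinal), hpxle⟩ with hpx
  have hD : derivSet (f '' A) ⊆ {px} := by
    intro p hp
    by_contra hne
    rw [Set.mem_singleton_iff] at hne
    rcases lt_trichotomy (p : Ordinal) (omega0 * (x : Ordinal)) with hlt | heq | hgt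
    · -- p below ω·x
      have hyne : (x : Ordinal) ∈ {z : Ordinal | (p : Ordinal) ≤ omega0 * z} := hlt.le
      have hy1 : (p : Ordinal) ≤ omega0 * sInf {z : Ordinal | (p : Ordinal) ≤ omega0 * z} :=
        csInf_mem ⟨_, hyne⟩
      have hyx : sInf {z : Ordinal | (p : Ordinal) ≤ omega0 * z} ≤ (x : Ordinal) :=
        csInf_le' hyne
      set y := sInf {z : Ordinal | (p : Ordinal) ≤ omega0 * z} with hy
      rcases lt_or_eq_of_le hyx with hylt | hyeq
      · -- y < x : p lies in a strictly smaller block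
        have hωy : omega0 * y < omega0 * (x : Ordinal) :=
          (mul_lt_mul_iff_right₀ omega0_pos).mpr hylt
        have hV : Set.Iic (⟨omega0 * y, (hωy.trans_le hpxle).le⟩ : OrdSpace (1 + a)) ∈ nhds p :=
          iic_mem_nhds (show (p : Ordinal) ≤ omega0 * y from hy1)
        have hU : Set.Ioi (⟨y, hyx.trans x.2⟩ : OrdSpace a) ∈ nhds x :=
          isOpen_Ioi.mem_nhds (show y < (x : Ordinal) from hylt)
        have hFfin := hconv _ hU
        refine absurd hp (not_derivSet_of_finite_inter hV ((hFfin.image f).subset ?_))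
        rintro z ⟨⟨n, hnA, rfl⟩, hzV⟩
        refine ⟨n, ⟨hnA, ?_⟩, rfl⟩
        intro hgn
        have hgn' : y < gq n := hgn
        exact absurd (hgmin n y (show (f n : Ordinal) ≤ omega0 * y from hzV)) (not_le.mpr hgn')
      · -- y = x : p is isolated
        have hzlt : ∀ z, z < (x : Ordinal) → omega0 * z < (p : Ordinal) := by
          intro z hz
          by_contra hle
          have hyz : y ≤ z := csInf_le' (not_lt.mp hle)
          rw [hyeq] at hyz
          exact absurd hz (not_lt.mpr hyz)
        rcases Ordinal.zero_or_succ_or_limit (x : Ordinal) with h0 | ⟨r, hr⟩ | hl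
        · rw [h0, mul_zero] at hlt
          exact zero_le.not_gt hlt
        · have hrx : r < (x : Ordinal) := hr ▸ Order.lt_succ r
          have hωr : omega0 * r < (p : Ordinal) := hzlt r hrx
          have hup : (p : Ordinal) < omega0 * r + omega0 := by
            rw [← Ordinal.mul_succ, ← hr]; exact hlt
          have hpk : omega0 * r + ((p : Ordinal) - omega0 * r) = (p : Ordinal) :=
            Ordinal.add_sub_cancel_of_le hωr.le
          have hkω : (p : Ordinal) - omega0 * r < omega0 := by
            rw [← add_lt_add_iff_left (omega0 * r), hpk]; exact hup
          obtain ⟨m, hm⟩ := Ordinal.lt_omega0.mp hkω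
          have hm0 : m ≠ 0 := by
            rintro rfl
            rw [Nat.cast_zero] at hm
            rw [hm, add_zero] at hpk
            exact absurd hpk.symm (ne_of_gt hωr)
          obtain ⟨m', rfl⟩ := Nat.exists_eq_succ_of_ne_zero hm0
          have hsucc : (p : Ordinal) = Order.succ (omega0 * r + m') := by
            rw [← hpk, hm, Nat.cast_succ, ← add_assoc, Ordinal.add_one_eq_succ]
          exact isolated_not_derivSet (not_limit_succ hsucc) _ hp
        · have hge : omega0 * (x : Ordinal) ≤ (p : Ordinal) :=
            (Ordinal.mul_le_iff_of_isSuccLimit hl).mpr fun z hz => (hzlt z hz).le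
          exact absurd hlt (not_lt.mpr hge)
    · exact hne (Subtype.ext heq)
    · -- p above ω·x
      have hU : Set.Iic x ∈ nhds x := iic_mem_nhds le_rfl
      have hFfin := hconv _ hU
      have hV : Set.Ioi px ∈ nhds p :=
        isOpen_Ioi.mem_nhds (show (px : Ordinal) < (p : Ordinal) from hgt)
      refine absurd hp (not_derivSet_of_finite_inter hV ((hFfin.image f).subset ?_))
      rintro z ⟨⟨n, hnA, rfl⟩, hzV⟩
      refine ⟨n, ⟨hnA, ?_⟩, rfl⟩
      intro hgn
      have hgn' : gq n ≤ (x : Ordinal) := hgn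
      have h1 : (f n : Ordinal) ≤ omega0 * (x : Ordinal) :=
        (hg1 n).trans (mul_le_mul_right hgn' _)
      exact absurd ((show omega0 * (x : Ordinal) < (f n : Ordinal) from hzV).trans_le h1)
        (lt_irrefl _)
  have hBconv : f '' A ∈ convIdeal (1 + a) := (Set.finite_singleton px).subset hD
  exact hA (hI.subset_mem (Set.subset_preimage_image f A) (hf _ hBconv))

/-! ### Direction 2: failure of FinBW implies Katětov below `I` -/

lemma dir2 {I : Set (Set ℕ)} (hI : IsIdeal I) (a : Ordinal)
    (hNF : ¬ InFinBW I (OrdSpace a)) : KatetovLE (convIdeal (1 + a)) I := by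
  rw [InFinBW] at hNF
  push_neg at hNF
  obtain ⟨g, hg⟩ := hNF
  have hfin : ∀ A : Set ℕ, A.Finite → A ∈ I := by
    intro A hA
    by_contra hAI
    exact hg A hAI ⟨0, (zero_le : (0 : Ordinal) ≤ omega0 ^ a)⟩ (fun U _ => hA.subset fun n hn => hn.1)
  have htop : omega0 ^ (1 + a) = omega0 * omega0 ^ a := by rw [opow_add, opow_one]
  have hflt : ∀ n : ℕ, (g n : Ordinal) < omega0 ^ a →
      omega0 * (g n : Ordinal) + n ≤ omega0 ^ (1 + a) := by
    intro n h
    rw [htop]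
    exact (omega_mul_add_lt h (nat_lt_omega0 n)).le
  set f : ℕ → OrdSpace (1 + a) := fun n =>
    if h : (g n : Ordinal) < omega0 ^ a then ⟨omega0 * (g n : Ordinal) + n, hflt n h⟩
    else ⟨omega0 ^ (1 + a), Set.self_mem_Iic⟩ with hfdef
  have hfval : ∀ n, (g n : Ordinal) < omega0 ^ a →
      (f n : Ordinal) = omega0 * (g n : Ordinal) + n := by
    intro n h
    simp only [hfdef, dif_pos h]
  refine ⟨f, ?_⟩
  intro B hB
  have hDfin : (derivSet B).Finite := hB
  set D := derivSet B with hDdef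
  -- indices sent to the top point
  have hAT : {n : ℕ | ¬ (g n : Ordinal) < omega0 ^ a} ∈ I := by
    by_contra hATI
    refine hg _ hATI ⟨omega0 ^ a, Set.self_mem_Iic⟩ ?_
    intro U hU
    have hemp : {n ∈ {n : ℕ | ¬ (g n : Ordinal) < omega0 ^ a} | g n ∉ U} = ∅ := by
      ext n
      simp only [Set.mem_setOf_eq, Set.mem_empty_iff_false, iff_false, not_and]
      intro h1 h2
      have hgeq : g n = ⟨omega0 ^ a, Set.self_mem_Iic⟩ :=
        Subtype.ext (le_antisymm (g n).2 (not_lt.mp h1))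
      exact h2 (hgeq ▸ mem_of_mem_nhds hU)
    rw [hemp]
    exact Set.finite_empty
  -- preimages of finite sets are finite on the non-top part
  have hpre : ∀ T : Set (OrdSpace (1 + a)), T.Finite →
      {n : ℕ | f n ∈ T ∧ (g n : Ordinal) < omega0 ^ a}.Finite := by
    intro T hT
    have hsub : {n : ℕ | f n ∈ T ∧ (g n : Ordinal) < omega0 ^ a} ⊆
        ⋃ z ∈ T, {n : ℕ | f n = z ∧ (g n : Ordinal) < omega0 ^ a} := by
      rintro n ⟨h1, h2⟩
      exact Set.mem_biUnion h1 ⟨rfl, h2⟩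
    refine (hT.biUnion ?_).subset hsub
    intro z _
    refine Set.Subsingleton.finite ?_
    rintro n ⟨hn1, hn2⟩ m ⟨hm1, hm2⟩
    have heq : omega0 * (g n : Ordinal) + n = omega0 * (g m : Ordinal) + m := by
      rw [← hfval n hn2, ← hfval m hm2, hn1, hm1]
    exact (omega_mul_add_inj heq).2
  classical
  -- the separating points below each element of D
  have hDio : ∀ d : OrdSpace (1 + a), (Subtype.val '' (D ∩ Set.Iio d)).Finite :=
    fun d => ((hDfin.inter_of_left _).image _)
  have hpd_le_c : ∀ d : OrdSpace (1 + a),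
      sSup (Subtype.val '' (D ∩ Set.Iio d)) ≤ omega0 ^ (1 + a) := by
    intro d
    refine csSup_le' ?_
    rintro z ⟨e, _, rfl⟩
    exact e.2
  set pdh : OrdSpace (1 + a) → OrdSpace (1 + a) :=
    fun d => ⟨sSup (Subtype.val '' (D ∩ Set.Iio d)), hpd_le_c d⟩ with hpdh
  have hpd_ub : ∀ d : OrdSpace (1 + a), ∀ e ∈ D, e < d → (e : Ordinal) ≤ (pdh d : Ordinal) := by
    intro d e he hed
    exact le_csSup (hDio d).bddAbove ⟨e, ⟨he, hed⟩, rfl⟩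
  have hpd_lt : ∀ d : OrdSpace (1 + a), 0 < (d : Ordinal) → (pdh d : Ordinal) < (d : Ordinal) := by
    intro d hd0
    show sSup (Subtype.val '' (D ∩ Set.Iio d)) < (d : Ordinal)
    rcases Set.eq_empty_or_nonempty (Subtype.val '' (D ∩ Set.Iio d)) with he | hne
    · rw [he, csSup_empty]
      exact hd0
    · obtain ⟨e, ⟨_, hed⟩, hev⟩ := hne.csSup_mem (hDio d)
      rw [← hev]
      exact hed
  -- the finitely many stray points
  set SB : Set (OrdSpace (1 + a)) := B \ ⋃ d ∈ D, Set.Ioc (pdh d) d with hSB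
  have hSBfin : SB.Finite := by
    by_contra hinf
    obtain ⟨e, he⟩ := infinite_derivSet_nonempty (show SB.Infinite from hinf)
    have heD : e ∈ D := derivSet_mono' Set.diff_subset he
    rcases Ordinal.zero_or_succ_or_limit (e : Ordinal) with h0 | ⟨r, hr⟩ | hl
    · exact isolated_not_derivSet (not_limit_zero h0) _ he
    · exact isolated_not_derivSet (not_limit_succ hr) _ he
    · have hV : Set.Ioc (pdh e) e ∈ nhds e :=
        ioc_mem_nhds (show (pdh e : Ordinal) < (e : Ordinal) from hpd_lt e hl.pos)
      refine not_derivSet_of_finite_inter hV ?_ he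
      have hemp : SB ∩ Set.Ioc (pdh e) e = ∅ := by
        ext z
        simp only [Set.mem_inter_iff, Set.mem_empty_iff_false, iff_false, not_and]
        rintro ⟨_, hz2⟩ hz3
        exact hz2 (Set.mem_biUnion heD hz3)
      rw [hemp]
      exact Set.finite_empty
  -- derived set of each local piece
  have hBd_deriv : ∀ d ∈ D, derivSet (B ∩ Set.Ioc (pdh d) d) ⊆ {d} := by
    intro d hdD e he
    have heD : e ∈ D := derivSet_mono' Set.inter_subset_left he
    have heled : e ≤ d := by
      have h1 : e ∈ closure ((B ∩ Set.Ioc (pdh d) d) \ {e}) := he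
      have h2 : (B ∩ Set.Ioc (pdh d) d) \ {e} ⊆ Set.Iic d := fun z hz => hz.1.2.2
      have h3 := (closure_mono h2) h1
      rwa [isClosed_Iic.closure_eq] at h3
    rcases eq_or_lt_of_le heled with heq | hlt
    · exact heq ▸ rfl
    · exfalso
      have hpe : (e : Ordinal) ≤ (pdh d : Ordinal) := hpd_ub d e heD hlt
      have hV : Set.Iic e ∈ nhds e := iic_mem_nhds le_rfl
      refine not_derivSet_of_finite_inter hV ?_ he
      have hemp : (B ∩ Set.Ioc (pdh d) d) ∩ Set.Iic e = ∅ := by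
        ext z
        simp only [Set.mem_inter_iff, Set.mem_empty_iff_false, iff_false, not_and]
        rintro ⟨_, hz1, _⟩ hz2
        exact absurd (le_trans (show (z : Ordinal) ≤ (e : Ordinal) from hz2) hpe)
          (not_le.mpr hz1)
      rw [hemp]
      exact Set.finite_empty
  -- each local piece pulls back into the ideal
  have hAd : ∀ d ∈ D,
      {n : ℕ | f n ∈ B ∩ Set.Ioc (pdh d) d ∧ (g n : Ordinal) < omega0 ^ a} ∈ I := by
    intro d hdD
    by_contra hAdI
    set Bd := B ∩ Set.Ioc (pdh d) d with hBdd
    set Ad := {n : ℕ | f n ∈ Bd ∧ (g n : Ordinal) < omega0 ^ a} with hAddef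
    have hnotlim : ¬ Order.IsSuccLimit (d : Ordinal) → False := by
      intro hnl
      have hBdfin : Bd.Finite := by
        by_contra hinf
        obtain ⟨e, he⟩ := infinite_derivSet_nonempty (show Bd.Infinite from hinf)
        have hed := hBd_deriv d hdD he
        rw [Set.mem_singleton_iff] at hed
        subst hed
        exact isolated_not_derivSet hnl _ he
      exact hAdI (hfin _ (hpre _ hBdfin))
    rcases Ordinal.zero_or_succ_or_limit (d : Ordinal) with h0 | ⟨r, hr⟩ | hl
    · exact hnotlim (not_limit_zero h0)
    · exact hnotlim (not_limit_succ hr)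
    -- now d is a limit, so d = ω·q
    have hmod : (d : Ordinal) % omega0 = 0 := by
      by_contra hm
      obtain ⟨m, hmm⟩ := Ordinal.lt_omega0.mp (Ordinal.mod_lt (d : Ordinal) omega0_ne_zero)
      have hm0 : m ≠ 0 := by
        rintro rfl
        rw [Nat.cast_zero] at hmm
        exact hm hmm
      obtain ⟨m', rfl⟩ := Nat.exists_eq_succ_of_ne_zero hm0
      refine not_limit_succ (r := omega0 * ((d : Ordinal) / omega0) + m') ?_ hl
      conv_lhs => rw [← Ordinal.div_add_mod (d : Ordinal) omega0]
      rw [hmm, Nat.cast_succ, ← add_assoc, Ordinal.add_one_eq_succ]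
    have hdq : omega0 * ((d : Ordinal) / omega0) = (d : Ordinal) := by
      have h1 := Ordinal.div_add_mod (d : Ordinal) omega0
      rwa [hmod, add_zero] at h1
    set q := (d : Ordinal) / omega0 with hq
    have hq0 : 0 < q := by
      rcases eq_zero_or_pos q with h0 | hpos
      · rw [h0, mul_zero] at hdq
        exact absurd hdq.symm (ne_of_gt hl.pos)
      · exact hpos
    have hqle : q ≤ omega0 ^ a := by
      refine le_of_mul_le_mul_left ?_ omega0_pos
      rw [hdq, ← htop]
      exact d.2
    set A1 := {n ∈ Ad | (g n : Ordinal) + 1 = q} with hA1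
    set A2 := Ad \ A1 with hA2
    have hsplit : Ad ⊆ A1 ∪ A2 := by
      intro n hn
      by_cases h : (g n : Ordinal) + 1 = q
      · exact Or.inl ⟨hn, h⟩
      · exact Or.inr ⟨hn, fun hc => h hc.2⟩
    have hone : A1 ∉ I ∨ A2 ∉ I := by
      by_contra hcon
      push_neg at hcon
      exact hAdI (hI.subset_mem hsplit (hI.union_mem hcon.1 hcon.2))
    rcases hone with hA1I | hA2I
    · -- constant part
      have hA1ne : A1.Nonempty := by
        rcases Set.eq_empty_or_nonempty A1 with he | hne
        · exact absurd (he ▸ hI.empty_mem) hA1I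
        · exact hne
      obtain ⟨n₀, hn₀⟩ := hA1ne
      refine hg A1 hA1I (g n₀) ?_
      intro U hU
      have hemp : {n ∈ A1 | g n ∉ U} = ∅ := by
        ext n
        simp only [Set.mem_setOf_eq, Set.mem_empty_iff_false, iff_false, not_and]
        intro hn hnU
        have h3 : Order.succ (g n : Ordinal) = Order.succ (g n₀ : Ordinal) := by
          rw [← Ordinal.add_one_eq_succ, ← Ordinal.add_one_eq_succ, hn.2, hn₀.2]
        have hgeq : g n = g n₀ := Subtype.ext (Order.succ_injective h3)
        exact hnU (hgeq ▸ mem_of_mem_nhds hU)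
      rw [hemp]
      exact Set.finite_empty
    · -- part converging to q
      refine hg A2 hA2I ⟨q, hqle⟩ ?_
      intro U hU
      obtain ⟨l, hlq, hsub⟩ := exists_Ioc_nhds
        (show (0 : Ordinal) < ((⟨q, hqle⟩ : OrdSpace a) : Ordinal) from hq0) hU
      have hlq' : (l : Ordinal) < q := hlq
      obtain ⟨w, hw1, hw2⟩ :
          ∃ w : Ordinal, w < (d : Ordinal) ∧ ∀ n ∈ A2,
            w < omega0 * (g n : Ordinal) + n → (l : Ordinal) < (g n : Ordinal) := by
        rcases Ordinal.zero_or_succ_or_limit q with h0 | ⟨r, hr⟩ | hql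
        · exact absurd h0 hq0.ne'
        · refine ⟨omega0 * r, ?_, ?_⟩
          · rw [← hdq]
            exact (mul_lt_mul_iff_right₀ omega0_pos).mpr (hr ▸ Order.lt_succ r)
          · intro n hn hwn
            have hge : r ≤ (g n : Ordinal) := le_of_omega_mul_lt (nat_lt_omega0 n) hwn
            have hner : (g n : Ordinal) ≠ r := by
              intro hcc
              exact hn.2 ⟨hn.1, by rw [hcc, Ordinal.add_one_eq_succ, ← hr]⟩
            have hrlt : r < (g n : Ordinal) := lt_of_le_of_ne hge (Ne.symm hner)
            have hlr : (l : Ordinal) ≤ r := by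
              have h4 := hlq'
              rw [hr] at h4
              exact Order.lt_succ_iff.mp h4
            exact lt_of_le_of_lt hlr hrlt
        · refine ⟨omega0 * ((l : Ordinal) + 1), ?_, ?_⟩
          · rw [← hdq]
            refine (mul_lt_mul_iff_right₀ omega0_pos).mpr ?_
            rw [Ordinal.add_one_eq_succ]
            exact hql.succ_lt hlq'
          · intro n hn hwn
            have hge : (l : Ordinal) + 1 ≤ (g n : Ordinal) :=
              le_of_omega_mul_lt (nat_lt_omega0 n) hwn
            calc (l : Ordinal) < (l : Ordinal) + 1 := by
                  rw [Ordinal.add_one_eq_succ]; exact Order.lt_succ _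
              _ ≤ (g n : Ordinal) := hge
      have hV : Set.Ioc (⟨w, (hw1.trans_le d.2).le⟩ : OrdSpace (1 + a)) d ∈ nhds d :=
        ioc_mem_nhds (show w < (d : Ordinal) from hw1)
      have hBdV : (Bd \ Set.Ioc (⟨w, (hw1.trans_le d.2).le⟩ : OrdSpace (1 + a)) d).Finite :=
        conv_of_derivSet_subset (hBd_deriv d hdD) hV
      refine (hpre _ hBdV).subset ?_
      rintro n ⟨hn2, hnU⟩
      obtain ⟨hfB, hglt⟩ := hn2.1
      refine ⟨⟨hfB, ?_⟩, hglt⟩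
      intro hfV
      obtain ⟨hfw, hfd⟩ := hfV
      have hfval' := hfval n hglt
      have hlgn : (l : Ordinal) < (g n : Ordinal) := by
        refine hw2 n hn2 ?_
        rw [← hfval']
        exact hfw
      have hgq : (g n : Ordinal) ≤ q := by
        refine le_of_omega_mul_add_le (nat_lt_omega0 n) ?_
        rw [← hfval', hdq]
        exact hfd
      exact hnU (hsub ⟨hlgn, hgq⟩)
  -- assemble
  have hSI : {n : ℕ | f n ∈ SB ∧ (g n : Ordinal) < omega0 ^ a} ∈ I := hfin _ (hpre _ hSBfin)
  have hUnion : (⋃ d ∈ D,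
      {n : ℕ | f n ∈ B ∩ Set.Ioc (pdh d) d ∧ (g n : Ordinal) < omega0 ^ a}) ∈ I :=
    hI.biUnion_mem hDfin hAd
  have hcover : f ⁻¹' B ⊆
      ({n : ℕ | ¬ (g n : Ordinal) < omega0 ^ a} ∪
        {n : ℕ | f n ∈ SB ∧ (g n : Ordinal) < omega0 ^ a}) ∪
      ⋃ d ∈ D, {n : ℕ | f n ∈ B ∩ Set.Ioc (pdh d) d ∧ (g n : Ordinal) < omega0 ^ a} := by
    intro n hn
    by_cases hgn : (g n : Ordinal) < omega0 ^ a
    · by_cases hS : f n ∈ ⋃ d ∈ D, Set.Ioc (pdh d) d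
      · rw [Set.mem_iUnion₂] at hS
        obtain ⟨d, hdD, hd⟩ := hS
        exact Or.inr (Set.mem_biUnion hdD ⟨⟨hn, hd⟩, hgn⟩)
      · exact Or.inl (Or.inr ⟨⟨hn, hS⟩, hgn⟩)
    · exact Or.inl (Or.inl hgn)
  exact hI.subset_mem hcover (hI.union_mem (hI.union_mem hAT hSI) hUnion)

/-- For any ideal `I` on `ω` and countable `α ≥ 1`:
`conv_{1+α} ≰_K I` iff `ω^α + 1 ∈ FinBW(I)`. -/
theorem stmt9 (I : Set (Set ℕ)) (hI : IsIdeal I)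
    (a : Ordinal) (ha : 1 ≤ a) (hac : a.card ≤ Cardinal.aleph0) :
    ¬ KatetovLE (convIdeal (1 + a)) I ↔ InFinBW I (OrdSpace a) := by
  constructor
  · intro hK
    by_contra hF
    exact hK (dir2 hI a hF)
  · intro hF hK
    exact dir1 hI a hK hF
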